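/- Let Φ : ℝ³ → ℝ³ be a C² diffeomorphism and let B̂ : ℝ³ → ℝ³ be a C¹ vector field. Define the 2-form push-forward B(x) := DΦ(Φ⁻¹(x)) B̂(Φ⁻¹(x)) / det DΦ(Φ⁻¹(x)). Then for every x̂ ∈ ℝ³, (div B)(Φ(x̂)) = (div B̂)(x̂) / det DΦ(x̂); that is, the divergence of the 2-form push-forward equals the 3-form push-forward (det DΦ)⁻¹(div B̂ ∘ Φ⁻¹) of the divergence. -/

import Mathlib

open MeasureTheory Matrix RealInnerProductSpace

noncomputable section

/-- Points/vectors in ℝ³. -/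
abbrev V3 : Type := Fin 3 → ℝ

/-- Partial derivative ∂ᵢ of a scalar function on ℝ³. -/
def pder (i : Fin 3) (f : V3 → ℝ) (x : V3) : ℝ :=
  fderiv ℝ f x (Pi.single i 1)

/-- Gradient of a scalar function on ℝ³. -/
def grad (f : V3 → ℝ) (x : V3) : V3 :=
  fun i => pder i f x

/-- Curl of a vector field on ℝ³. -/
def curl (F : V3 → V3) (x : V3) : V3 :=
  ![pder 1 (fun y => F y 2) x - pder 2 (fun y => F y 1) x,
    pder 2 (fun y => F y 0) x - pder 0 (fun y => F y 2) x,
    pder 0 (fun y => F y 1) x - pder 1 (fun y => F y 0) x]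

/-- Divergence of a vector field on ℝ³. -/
def dvg (F : V3 → V3) (x : V3) : ℝ :=
  pder 0 (fun y => F y 0) x + pder 1 (fun y => F y 1) x + pder 2 (fun y => F y 2) x

/-- Cross product on ℝ³. -/
def cross (a b : V3) : V3 :=
  ![a 1 * b 2 - a 2 * b 1, a 2 * b 0 - a 0 * b 2, a 0 * b 1 - a 1 * b 0]

/-- Euclidean dot product on ℝ³. -/
def dot (a b : V3) : ℝ := ∑ i, a i * b i

/-- Jacobian matrix (DΦ(x))ᵢⱼ = ∂Φᵢ/∂xⱼ. -/
def jac (Φ : V3 → V3) (x : V3) : Matrix (Fin 3) (Fin 3) ℝ :=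
  Matrix.of fun i j => pder j (fun y => Φ y i) x

/-! ### Auxiliary machinery -/

lemma clm_sum_apply (L : V3 →L[ℝ] ℝ) (v : V3) : L v = ∑ k, v k * L (Pi.single k 1) := by
  conv_lhs => rw [← Finset.univ_sum_single v]
  rw [map_sum]
  congr 1; ext k
  have : (Pi.single k (v k) : V3) = v k • (Pi.single k 1 : V3) := by
    ext j; by_cases h : j = k <;> simp [Pi.single_apply, h]
  rw [this, L.map_smul, smul_eq_mul]

lemma clm_sum_apply_vec (L : V3 →L[ℝ] V3) (v : V3) (i : Fin 3) :
    (L v) i = ∑ k, v k * (L (Pi.single k 1)) i := by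
  have := clm_sum_apply ((ContinuousLinearMap.proj i : V3 →L[ℝ] ℝ).comp L) v
  simpa using this

lemma fderiv_component (f : V3 → V3) (x : V3) (hf : DifferentiableAt ℝ f x) (i : Fin 3) :
    fderiv ℝ (fun y => f y i) x = (ContinuousLinearMap.proj i : V3 →L[ℝ] ℝ).comp (fderiv ℝ f x) :=
  ((ContinuousLinearMap.proj i : V3 →L[ℝ] ℝ).hasFDerivAt.comp x hf.hasFDerivAt).fderiv

lemma pder_mul (f g : V3 → ℝ) (x : V3) (hf : DifferentiableAt ℝ f x)
    (hg : DifferentiableAt ℝ g x) (i : Fin 3) :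
    pder i (fun z => f z * g z) x = pder i f x * g x + f x * pder i g x := by
  unfold pder
  rw [fderiv_fun_mul hf hg]
  simp [ContinuousLinearMap.add_apply, ContinuousLinearMap.smul_apply, smul_eq_mul]
  ring

lemma pder_add (f g : V3 → ℝ) (x : V3) (hf : DifferentiableAt ℝ f x)
    (hg : DifferentiableAt ℝ g x) (i : Fin 3) :
    pder i (fun z => f z + g z) x = pder i f x + pder i g x := by
  unfold pder; rw [fderiv_fun_add hf hg]; simp

lemma pder_sub (f g : V3 → ℝ) (x : V3) (hf : DifferentiableAt ℝ f x)
    (hg : DifferentiableAt ℝ g x) (i : Fin 3) :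
    pder i (fun z => f z - g z) x = pder i f x - pder i g x := by
  unfold pder; rw [fderiv_fun_sub hf hg]; simp

lemma pder_inv (f : V3 → ℝ) (x : V3) (hf : DifferentiableAt ℝ f x) (h0 : f x ≠ 0) (i : Fin 3) :
    pder i (fun z => (f z)⁻¹) x = -(f x ^ 2)⁻¹ * pder i f x := by
  unfold pder
  have h := (hasFDerivAt_inv h0).comp x hf.hasFDerivAt
  rw [show (fun z => (f z)⁻¹) = (fun t : ℝ => t⁻¹) ∘ f from rfl, h.fderiv]
  simp only [ContinuousLinearMap.coe_comp', Function.comp_apply,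
    ContinuousLinearMap.smulRight_apply, ContinuousLinearMap.one_apply, smul_eq_mul,
    ContinuousLinearMap.toSpanSingleton_apply]
  ring

lemma pder_mul3 (f g h : V3 → ℝ) (x : V3) (hf : DifferentiableAt ℝ f x)
    (hg : DifferentiableAt ℝ g x) (hh : DifferentiableAt ℝ h x) (i : Fin 3) :
    pder i (fun z => f z * g z * h z) x =
      pder i f x * g x * h x + f x * pder i g x * h x + f x * g x * pder i h x := by
  rw [pder_mul _ _ _ (hf.fun_mul hg) hh, pder_mul _ _ _ hf hg]
  ring

lemma pder_sum6 (t1 t2 t3 t4 t5 t6 : V3 → ℝ) (x : V3)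
    (h1 : DifferentiableAt ℝ t1 x) (h2 : DifferentiableAt ℝ t2 x)
    (h3 : DifferentiableAt ℝ t3 x) (h4 : DifferentiableAt ℝ t4 x)
    (h5 : DifferentiableAt ℝ t5 x) (h6 : DifferentiableAt ℝ t6 x) (k : Fin 3) :
    pder k (fun z => t1 z - t2 z - t3 z + t4 z + t5 z - t6 z) x
      = pder k t1 x - pder k t2 x - pder k t3 x + pder k t4 x + pder k t5 x - pder k t6 x := by
  rw [pder_sub _ _ _ ((((h1.fun_sub h2).fun_sub h3).fun_add h4).fun_add h5) h6,
    pder_add _ _ _ (((h1.fun_sub h2).fun_sub h3).fun_add h4) h5,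
    pder_add _ _ _ ((h1.fun_sub h2).fun_sub h3) h4,
    pder_sub _ _ _ (h1.fun_sub h2) h3,
    pder_sub _ _ _ h1 h2]

lemma pder_comp (f : V3 → ℝ) (Φ : V3 → V3) (x : V3) (hf : DifferentiableAt ℝ f (Φ x))
    (hΦ : DifferentiableAt ℝ Φ x) (j : Fin 3) :
    pder j (fun z => f (Φ z)) x =
      ∑ k, pder k f (Φ x) * (fderiv ℝ Φ x (Pi.single j 1)) k := by
  unfold pder
  rw [show (fun z => f (Φ z)) = f ∘ Φ from rfl, fderiv_comp x hf hΦ]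
  simp only [ContinuousLinearMap.coe_comp', Function.comp_apply]
  rw [clm_sum_apply]
  exact Finset.sum_congr rfl (fun k _ => by ring)

/-- Entries of the Jacobian, as functions. -/
def Ef (Φ : V3 → V3) (i j : Fin 3) (z : V3) : ℝ := fderiv ℝ Φ z (Pi.single j 1) i

lemma jacE (Φ : V3 → V3) (x : V3) (hf : DifferentiableAt ℝ Φ x) (i j : Fin 3) :
    jac Φ x i j = Ef Φ i j x := by
  unfold jac pder Ef
  rw [Matrix.of_apply, fderiv_component Φ x hf i]
  rfl

lemma Ef_diff {Φ : V3 → V3} (hΦ : ContDiff ℝ 2 Φ) (i j : Fin 3) :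
    Differentiable ℝ (Ef Φ i j) := by
  have h1 : ContDiff ℝ 1 (fderiv ℝ Φ) := hΦ.fderiv_right (by norm_num)
  have h2 : ContDiff ℝ 1 (fun z => fderiv ℝ Φ z (Pi.single j 1)) := h1.clm_apply contDiff_const
  exact (ContinuousLinearMap.proj i : V3 →L[ℝ] ℝ).differentiable.comp (h2.differentiable one_ne_zero)

lemma schwarzE {Φ : V3 → V3} (hΦ : ContDiff ℝ 2 Φ) (x : V3) (i j k : Fin 3) :
    pder k (Ef Φ i j) x = pder j (Ef Φ i k) x := by
  have h1 : ContDiff ℝ 1 (fderiv ℝ Φ) := hΦ.fderiv_right (by norm_num)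
  have hd1 : Differentiable ℝ (fderiv ℝ Φ) := h1.differentiable one_ne_zero
  have key : ∀ a b : Fin 3, pder a (Ef Φ i b) x
      = fderiv ℝ (fderiv ℝ Φ) x (Pi.single a 1) (Pi.single b 1) i := by
    intro a b
    unfold pder Ef
    rw [fderiv_component _ x (((h1.clm_apply contDiff_const).differentiable one_ne_zero) x)]
    rw [fderiv_clm_apply (hd1 x) (differentiableAt_const _)]
    simp
  rw [key, key]
  rw [second_derivative_symmetric
    (fun y => ((hΦ.differentiable (by norm_num)) y).hasFDerivAt)
    ((hd1 x).hasFDerivAt) (Pi.single k 1) (Pi.single j 1)]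

section detS

variable {Φ Bhat : V3 → V3}

lemma detE_eq (hΦd : Differentiable ℝ Φ) :
    (fun z => (jac Φ z).det) = fun z =>
      Ef Φ 0 0 z * Ef Φ 1 1 z * Ef Φ 2 2 z - Ef Φ 0 0 z * Ef Φ 1 2 z * Ef Φ 2 1 z
      - Ef Φ 0 1 z * Ef Φ 1 0 z * Ef Φ 2 2 z + Ef Φ 0 1 z * Ef Φ 1 2 z * Ef Φ 2 0 z
      + Ef Φ 0 2 z * Ef Φ 1 0 z * Ef Φ 2 1 z - Ef Φ 0 2 z * Ef Φ 1 1 z * Ef Φ 2 0 z := by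
  funext z
  rw [Matrix.det_fin_three]
  simp only [jacE Φ z (hΦd z)]

lemma detE_diff (hΦ : ContDiff ℝ 2 Φ) : Differentiable ℝ (fun z => (jac Φ z).det) := by
  rw [detE_eq (hΦ.differentiable (by norm_num))]
  have hE := Ef_diff hΦ
  exact (((((((hE 0 0).mul (hE 1 1)).mul (hE 2 2)).sub
    (((hE 0 0).mul (hE 1 2)).mul (hE 2 1))).sub
    (((hE 0 1).mul (hE 1 0)).mul (hE 2 2))).add
    (((hE 0 1).mul (hE 1 2)).mul (hE 2 0))).add
    (((hE 0 2).mul (hE 1 0)).mul (hE 2 1))).sub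
    (((hE 0 2).mul (hE 1 1)).mul (hE 2 0))

lemma pder_detE (hΦ : ContDiff ℝ 2 Φ) (x : V3) (k : Fin 3) :
    pder k (fun z => (jac Φ z).det) x =
      (pder k (Ef Φ 0 0) x * Ef Φ 1 1 x * Ef Φ 2 2 x + Ef Φ 0 0 x * pder k (Ef Φ 1 1) x * Ef Φ 2 2 x
        + Ef Φ 0 0 x * Ef Φ 1 1 x * pder k (Ef Φ 2 2) x)
      - (pder k (Ef Φ 0 0) x * Ef Φ 1 2 x * Ef Φ 2 1 x + Ef Φ 0 0 x * pder k (Ef Φ 1 2) x * Ef Φ 2 1 x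
        + Ef Φ 0 0 x * Ef Φ 1 2 x * pder k (Ef Φ 2 1) x)
      - (pder k (Ef Φ 0 1) x * Ef Φ 1 0 x * Ef Φ 2 2 x + Ef Φ 0 1 x * pder k (Ef Φ 1 0) x * Ef Φ 2 2 x
        + Ef Φ 0 1 x * Ef Φ 1 0 x * pder k (Ef Φ 2 2) x)
      + (pder k (Ef Φ 0 1) x * Ef Φ 1 2 x * Ef Φ 2 0 x + Ef Φ 0 1 x * pder k (Ef Φ 1 2) x * Ef Φ 2 0 x
        + Ef Φ 0 1 x * Ef Φ 1 2 x * pder k (Ef Φ 2 0) x)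
      + (pder k (Ef Φ 0 2) x * Ef Φ 1 0 x * Ef Φ 2 1 x + Ef Φ 0 2 x * pder k (Ef Φ 1 0) x * Ef Φ 2 1 x
        + Ef Φ 0 2 x * Ef Φ 1 0 x * pder k (Ef Φ 2 1) x)
      - (pder k (Ef Φ 0 2) x * Ef Φ 1 1 x * Ef Φ 2 0 x + Ef Φ 0 2 x * pder k (Ef Φ 1 1) x * Ef Φ 2 0 x
        + Ef Φ 0 2 x * Ef Φ 1 1 x * pder k (Ef Φ 2 0) x) := by
  have hE := Ef_diff hΦ
  rw [detE_eq (hΦ.differentiable (by norm_num))]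
  rw [pder_sum6 _ _ _ _ _ _ x
    (((hE 0 0).fun_mul (hE 1 1)).fun_mul (hE 2 2) |>.differentiableAt)
    (((hE 0 0).fun_mul (hE 1 2)).fun_mul (hE 2 1) |>.differentiableAt)
    (((hE 0 1).fun_mul (hE 1 0)).fun_mul (hE 2 2) |>.differentiableAt)
    (((hE 0 1).fun_mul (hE 1 2)).fun_mul (hE 2 0) |>.differentiableAt)
    (((hE 0 2).fun_mul (hE 1 0)).fun_mul (hE 2 1) |>.differentiableAt)
    (((hE 0 2).fun_mul (hE 1 1)).fun_mul (hE 2 0) |>.differentiableAt) k]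
  rw [pder_mul3 (Ef Φ 0 0) (Ef Φ 1 1) (Ef Φ 2 2) x ((hE 0 0) x) ((hE 1 1) x) ((hE 2 2) x) k,
    pder_mul3 (Ef Φ 0 0) (Ef Φ 1 2) (Ef Φ 2 1) x ((hE 0 0) x) ((hE 1 2) x) ((hE 2 1) x) k,
    pder_mul3 (Ef Φ 0 1) (Ef Φ 1 0) (Ef Φ 2 2) x ((hE 0 1) x) ((hE 1 0) x) ((hE 2 2) x) k,
    pder_mul3 (Ef Φ 0 1) (Ef Φ 1 2) (Ef Φ 2 0) x ((hE 0 1) x) ((hE 1 2) x) ((hE 2 0) x) k,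
    pder_mul3 (Ef Φ 0 2) (Ef Φ 1 0) (Ef Φ 2 1) x ((hE 0 2) x) ((hE 1 0) x) ((hE 2 1) x) k,
    pder_mul3 (Ef Φ 0 2) (Ef Φ 1 1) (Ef Φ 2 0) x ((hE 0 2) x) ((hE 1 1) x) ((hE 2 0) x) k]

/-- The composition `B ∘ Φ`, written directly in terms of `Φ` and `Bhat`: the `i`-th
component of `(jac Φ z).mulVec (Bhat z)`. -/
def Sf (Φ Bhat : V3 → V3) (i : Fin 3) (z : V3) : ℝ :=
  Ef Φ i 0 z * Bhat z 0 + Ef Φ i 1 z * Bhat z 1 + Ef Φ i 2 z * Bhat z 2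

def Gf (Φ Bhat : V3 → V3) (i : Fin 3) (z : V3) : ℝ := ((jac Φ z).det)⁻¹ * Sf Φ Bhat i z

lemma bh_diff (hBhat : ContDiff ℝ 1 Bhat) (m : Fin 3) :
    Differentiable ℝ (fun z => Bhat z m) :=
  (ContinuousLinearMap.proj m : V3 →L[ℝ] ℝ).differentiable.comp (hBhat.differentiable one_ne_zero)

lemma Sf_diff (hΦ : ContDiff ℝ 2 Φ) (hBhat : ContDiff ℝ 1 Bhat) (i : Fin 3) :
    Differentiable ℝ (Sf Φ Bhat i) := by
  have hE := Ef_diff hΦ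
  have hb := bh_diff hBhat
  exact ((((hE i 0).mul (hb 0)).add ((hE i 1).mul (hb 1))).add ((hE i 2).mul (hb 2)))

lemma pder_Sf (hΦ : ContDiff ℝ 2 Φ) (hBhat : ContDiff ℝ 1 Bhat) (i k : Fin 3) (x : V3) :
    pder k (Sf Φ Bhat i) x =
      (pder k (Ef Φ i 0) x * Bhat x 0 + Ef Φ i 0 x * pder k (fun z => Bhat z 0) x)
      + (pder k (Ef Φ i 1) x * Bhat x 1 + Ef Φ i 1 x * pder k (fun z => Bhat z 1) x)
      + (pder k (Ef Φ i 2) x * Bhat x 2 + Ef Φ i 2 x * pder k (fun z => Bhat z 2) x) := by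
  have hE := Ef_diff hΦ
  have hb := bh_diff hBhat
  show pder k (fun z => Ef Φ i 0 z * Bhat z 0 + Ef Φ i 1 z * Bhat z 1 + Ef Φ i 2 z * Bhat z 2) x = _
  rw [pder_add _ _ _ (((hE i 0).fun_mul (hb 0)).fun_add ((hE i 1).fun_mul (hb 1)) |>.differentiableAt)
      (((hE i 2).fun_mul (hb 2)).differentiableAt) k,
    pder_add _ _ _ (((hE i 0).fun_mul (hb 0)).differentiableAt)
      (((hE i 1).fun_mul (hb 1)).differentiableAt) k,
    pder_mul (Ef Φ i 0) (fun z => Bhat z 0) x ((hE i 0) x) ((hb 0) x) k,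
    pder_mul (Ef Φ i 1) (fun z => Bhat z 1) x ((hE i 1) x) ((hb 1) x) k,
    pder_mul (Ef Φ i 2) (fun z => Bhat z 2) x ((hE i 2) x) ((hb 2) x) k]

lemma Gf_diffAt (hΦ : ContDiff ℝ 2 Φ) (hBhat : ContDiff ℝ 1 Bhat) (i : Fin 3) (x : V3)
    (hdet : (jac Φ x).det ≠ 0) : DifferentiableAt ℝ (Gf Φ Bhat i) x :=
  (((detE_diff hΦ) x).inv hdet).mul ((Sf_diff hΦ hBhat i) x)

lemma pder_Gf (hΦ : ContDiff ℝ 2 Φ) (hBhat : ContDiff ℝ 1 Bhat) (i k : Fin 3) (x : V3)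
    (hdet : (jac Φ x).det ≠ 0) :
    pder k (Gf Φ Bhat i) x =
      -(((jac Φ x).det) ^ 2)⁻¹ * pder k (fun z => (jac Φ z).det) x * Sf Φ Bhat i x
        + ((jac Φ x).det)⁻¹ * pder k (Sf Φ Bhat i) x := by
  show pder k (fun z => ((jac Φ z).det)⁻¹ * Sf Φ Bhat i z) x = _
  rw [pder_mul (fun z => ((jac Φ z).det)⁻¹) (Sf Φ Bhat i) x
      (((detE_diff hΦ) x).inv hdet) ((Sf_diff hΦ hBhat i) x) k,
    pder_inv (fun z => (jac Φ z).det) x ((detE_diff hΦ) x) hdet k]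

end detS

/-- the divergence of the 2-form push-forward equals the 3-form
push-forward of the divergence. -/
theorem pushforward_two_form_div
    (Φ Ψ : V3 → V3) (hΦ : ContDiff ℝ 2 Φ) (hΨ : ContDiff ℝ 2 Ψ)
    (hleft : Function.LeftInverse Ψ Φ) (hright : Function.RightInverse Ψ Φ)
    (Bhat : V3 → V3) (hBhat : ContDiff ℝ 1 Bhat)
    (B : V3 → V3)
    (hB : B = fun x => ((jac Φ (Ψ x)).det)⁻¹ • (jac Φ (Ψ x)).mulVec (Bhat (Ψ x))) :
    ∀ xhat : V3,
      dvg B (Φ xhat) = ((jac Φ xhat).det)⁻¹ * dvg Bhat xhat := by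
  intro xhat
  have hΦd : Differentiable ℝ Φ := hΦ.differentiable (by norm_num)
  have hΨd : Differentiable ℝ Ψ := hΨ.differentiable (by norm_num)
  -- the Jacobians of Φ and Ψ are inverse matrices
  have hidc : (fderiv ℝ Ψ (Φ xhat)).comp (fderiv ℝ Φ xhat) = ContinuousLinearMap.id ℝ V3 := by
    have h1 : HasFDerivAt (Ψ ∘ Φ) ((fderiv ℝ Ψ (Φ xhat)).comp (fderiv ℝ Φ xhat)) xhat :=
      ((hΨd (Φ xhat)).hasFDerivAt).comp xhat ((hΦd xhat).hasFDerivAt)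
    have h2 : (Ψ ∘ Φ) = id := funext hleft
    rw [h2] at h1
    exact h1.unique (hasFDerivAt_id xhat)
  have hKA : jac Ψ (Φ xhat) * jac Φ xhat = 1 := by
    ext i j
    rw [Matrix.mul_apply]
    have he : ∀ k, jac Ψ (Φ xhat) i k * jac Φ xhat k j
        = (fderiv ℝ Φ xhat (Pi.single j 1)) k * ((fderiv ℝ Ψ (Φ xhat)) (Pi.single k 1)) i :=
      fun k => by
        rw [jacE Ψ _ (hΨd _), jacE Φ _ (hΦd _)]; unfold Ef; ring
    rw [Finset.sum_congr rfl fun k _ => he k,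
      ← clm_sum_apply_vec (fderiv ℝ Ψ (Φ xhat)) (fderiv ℝ Φ xhat (Pi.single j 1)) i]
    rw [← ContinuousLinearMap.comp_apply, hidc]
    simp [Matrix.one_apply, Pi.single_apply, eq_comm]
  have hdet : (jac Φ xhat).det ≠ 0 := by
    have h := congrArg Matrix.det hKA
    rw [Matrix.det_mul, Matrix.det_one] at h
    exact right_ne_zero_of_mul_eq_one h
  -- the components of B are Gf ∘ Ψ
  have hBi : ∀ i : Fin 3, (fun z => B z i) = (fun z => Gf Φ Bhat i (Ψ z)) := by
    intro i
    funext z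
    rw [hB]
    simp only [Gf, Sf, Pi.smul_apply, smul_eq_mul, Matrix.mulVec, dotProduct,
      Fin.sum_univ_three, jacE Φ (Ψ z) (hΦd (Ψ z))]
  -- chain rule
  have hch : ∀ i : Fin 3, pder i (fun z => Gf Φ Bhat i (Ψ z)) (Φ xhat)
      = ∑ k, pder k (Gf Φ Bhat i) xhat * jac Ψ (Φ xhat) k i := by
    intro i
    have hG : DifferentiableAt ℝ (Gf Φ Bhat i) (Ψ (Φ xhat)) := by
      rw [hleft xhat]; exact Gf_diffAt hΦ hBhat i xhat hdet
    rw [pder_comp (Gf Φ Bhat i) Ψ (Φ xhat) hG (hΨd (Φ xhat)) i]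
    refine Finset.sum_congr rfl fun k _ => ?_
    rw [hleft xhat, jacE Ψ (Φ xhat) (hΨd (Φ xhat)) k i]
    rfl
  -- inverse Jacobian entries via the adjugate
  have hKe : ∀ k i : Fin 3, jac Ψ (Φ xhat) k i
      = ((jac Φ xhat).det)⁻¹ * (jac Φ xhat).adjugate k i := by
    intro k i
    have h1 : (jac Φ xhat)⁻¹ = jac Ψ (Φ xhat) := Matrix.inv_eq_left_inv hKA
    rw [← h1, Matrix.inv_def, Ring.inverse_eq_inv', Matrix.smul_apply, smul_eq_mul]
  have hdetval := congrFun (detE_eq (Φ := Φ) hΦd) xhat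
  have hsy := schwarzE hΦ xhat
  unfold dvg
  rw [hBi 0, hBi 1, hBi 2, hch 0, hch 1, hch 2]
  simp only [Fin.sum_univ_three, hKe, Matrix.adjugate_fin_three, Matrix.cons_val',
    Matrix.cons_val_zero, Matrix.cons_val_one, Matrix.head_cons,
    Matrix.empty_val', Matrix.cons_val_fin_one, Matrix.head_fin_const,
    Matrix.of_apply, Matrix.cons_val_two, Matrix.tail_cons]
  simp only [pder_Gf hΦ hBhat _ _ xhat hdet, pder_detE hΦ xhat, pder_Sf hΦ hBhat,
    Sf, jacE Φ xhat (hΦd xhat), hdetval]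
  simp only [hsy 0 1 0, hsy 0 2 0, hsy 0 2 1, hsy 1 1 0, hsy 1 2 0, hsy 1 2 1,
    hsy 2 1 0, hsy 2 2 0, hsy 2 2 1]
  have hP : Ef Φ 0 0 xhat * Ef Φ 1 1 xhat * Ef Φ 2 2 xhat
      - Ef Φ 0 0 xhat * Ef Φ 1 2 xhat * Ef Φ 2 1 xhat
      - Ef Φ 0 1 xhat * Ef Φ 1 0 xhat * Ef Φ 2 2 xhat
      + Ef Φ 0 1 xhat * Ef Φ 1 2 xhat * Ef Φ 2 0 xhat
      + Ef Φ 0 2 xhat * Ef Φ 1 0 xhat * Ef Φ 2 1 xhat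
      - Ef Φ 0 2 xhat * Ef Φ 1 1 xhat * Ef Φ 2 0 xhat ≠ 0 := by
    rw [← hdetval]; exact hdet
  generalize hD : (Ef Φ 0 0 xhat * Ef Φ 1 1 xhat * Ef Φ 2 2 xhat
      - Ef Φ 0 0 xhat * Ef Φ 1 2 xhat * Ef Φ 2 1 xhat
      - Ef Φ 0 1 xhat * Ef Φ 1 0 xhat * Ef Φ 2 2 xhat
      + Ef Φ 0 1 xhat * Ef Φ 1 2 xhat * Ef Φ 2 0 xhat
      + Ef Φ 0 2 xhat * Ef Φ 1 0 xhat * Ef Φ 2 1 xhat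
      - Ef Φ 0 2 xhat * Ef Φ 1 1 xhat * Ef Φ 2 0 xhat) = D at hP ⊢
  field_simp
  subst hD
  ring

end
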